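/- Let $n, \delta_m > 0$, $0 < w \le 1$, $b > 1$, and define the set of relief intervals $\mathcal{R} = \bigcup_{k=0}^{K} \mathcal{R}_k$ where $K = \lfloor \log_b((1+w)n/\delta_m) \rfloor$, $\ell_k = b^k \delta_m/(1+w)$, $s_k = w\ell_k$, $n_k = \lfloor (n-\ell_k)/s_k \rfloor$, and $\mathcal{R}_k$ consists of the $n_k+1$ intervals $(q s_k + a_k, q s_k + \ell_k + a_k]$ for $0 \le q \le n_k$ (with $a_k$ a centering shift). Then the cardinality of $\mathcal{R}$ satisfies $|\mathcal{R}| \le \frac{(1+w)b}{w(b-1)} \cdot \frac{n}{\delta_m}$. -/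

import Mathlib

open Real Set

lemma geom_sum_le_inv_one_sub {r : ℝ} (h0 : 0 ≤ r) (h1 : r < 1) (N : ℕ) :
    ∑ i ∈ Finset.range N, r ^ i ≤ (1 - r)⁻¹ := by
  have hne : r ≠ 1 := ne_of_lt h1
  rw [geom_sum_eq hne, div_le_iff_of_neg (by linarith : r - 1 < 0)]
  have heq : (1 - r)⁻¹ * (r - 1) = -1 := by
    rw [inv_mul_eq_div, div_eq_iff (by linarith : (1:ℝ) - r ≠ 0)]
    ring
  rw [heq]
  linarith [pow_nonneg h0 N]

/-- Proposition 1(i), cardinality bound: the number of relief intervals is at most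
`((1+w)b)/(w(b-1)) · n/δ`. -/
theorem relief_intervals_card_bound
    (n δ w b : ℝ) (hn : 0 < n) (hδ : 0 < δ)
    (hw : 0 < w) (hw1 : w ≤ 1) (hb : 1 < b)
    (K : ℤ) (hK : K = ⌊Real.logb b ((1 + w) * n / δ)⌋)
    (ℓ s : ℕ → ℝ) (hℓ : ∀ k, ℓ k = b ^ k * δ / (1 + w))
    (hs : ∀ k, s k = w * ℓ k)
    (nk : ℕ → ℤ) (hnk : ∀ k, nk k = ⌊(n - ℓ k) / s k⌋)
    (a : ℕ → ℝ) (ha : ∀ k, a k = n / 2 - (ℓ k + (nk k : ℝ) * s k) / 2)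
    (ℛ : Set (Set ℝ))
    (hℛ : ℛ = {R | ∃ k : ℕ, (k : ℤ) ≤ K ∧ ∃ q : ℤ, 0 ≤ q ∧ q ≤ nk k ∧
      R = Set.Ioc ((q : ℝ) * s k + a k) ((q : ℝ) * s k + ℓ k + a k)}) :
    (ℛ.ncard : ℝ) ≤ ((1 + w) * b) / (w * (b - 1)) * (n / δ) := by
  classical
  have hw0 : (0:ℝ) < 1 + w := by linarith
  have hb0 : (0:ℝ) < b := by linarith
  have hℓpos : ∀ k, 0 < ℓ k := fun k => by rw [hℓ]; positivity
  have hspos : ∀ k, 0 < s k := fun k => by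
    rw [hs]; exact mul_pos hw (hℓpos k)
  have hsl : ∀ k, s k ≤ ℓ k := fun k => by
    rw [hs]; nlinarith [hℓpos k]
  set N : ℕ := K.toNat + 1 with hN
  set F : ℕ × ℤ → Set ℝ := fun p =>
    Set.Ioc ((p.2 : ℝ) * s p.1 + a p.1) ((p.2 : ℝ) * s p.1 + ℓ p.1 + a p.1) with hF
  set D : Finset (ℕ × ℤ) :=
    (Finset.range N).biUnion (fun k => (Finset.Icc (0:ℤ) (nk k)).image (fun q => (k, q)))
    with hD
  -- ℛ is contained in the image of D
  have hsub : ℛ ⊆ F '' (D : Set (ℕ × ℤ)) := by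
    rw [hℛ]
    rintro R ⟨k, hk, q, hq0, hqn, rfl⟩
    have hmem : (k, q) ∈ D := by
      rw [hD]
      simp only [Finset.mem_biUnion, Finset.mem_range, Finset.mem_image, Finset.mem_Icc]
      exact ⟨k, by omega, q, ⟨hq0, hqn⟩, rfl⟩
    exact ⟨(k, q), hmem, rfl⟩
  have hcard : ℛ.ncard ≤ D.card := by
    calc ℛ.ncard ≤ (F '' (D : Set (ℕ × ℤ))).ncard :=
          Set.ncard_le_ncard hsub (D.finite_toSet.image F)
      _ ≤ (D : Set (ℕ × ℤ)).ncard := Set.ncard_image_le D.finite_toSet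
      _ = D.card := Set.ncard_coe_finset D
  have hDcard : D.card ≤ ∑ k ∈ Finset.range N, (nk k + 1).toNat := by
    refine le_trans (Finset.card_biUnion_le) ?_
    apply Finset.sum_le_sum
    intro k _
    calc ((Finset.Icc (0:ℤ) (nk k)).image (fun q => (k, q))).card
        ≤ (Finset.Icc (0:ℤ) (nk k)).card := Finset.card_image_le
      _ = (nk k + 1).toNat := by rw [Int.card_Icc]; ring_nf
  -- per-layer real bound
  have hterm : ∀ k, ((nk k + 1).toNat : ℝ) ≤ n / s k := by
    intro k
    have hnpos : 0 < n / s k := div_pos hn (hspos k)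
    by_cases h : 0 ≤ nk k + 1
    · have hcast : (((nk k + 1).toNat : ℕ) : ℝ) = (nk k : ℝ) + 1 := by
        exact_mod_cast congrArg (fun z : ℤ => (z : ℝ)) (Int.toNat_of_nonneg h)
      rw [hcast, le_div_iff₀ (hspos k)]
      have h1 : (nk k : ℝ) * s k ≤ n - ℓ k := by
        have : (nk k : ℝ) ≤ (n - ℓ k) / s k := by
          rw [hnk]; exact Int.floor_le _
        exact (le_div_iff₀ (hspos k)).mp this
      nlinarith [hsl k, hspos k]
    · have : (nk k + 1).toNat = 0 := Int.toNat_of_nonpos (by omega)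
      rw [this]
      simpa using le_of_lt hnpos
  -- n / s k is geometric in k
  have hgeo : ∀ k, n / s k = (n * (1 + w) / (w * δ)) * (1 / b) ^ k := by
    intro k
    rw [hs, hℓ]
    have hbk : (0:ℝ) < b ^ k := pow_pos hb0 k
    field_simp
    ring_nf
    rw [← mul_pow, mul_inv_cancel₀ hb0.ne', one_pow]
  have hsum : (∑ k ∈ Finset.range N, ((nk k + 1).toNat : ℝ))
      ≤ (n * (1 + w) / (w * δ)) * (1 - 1 / b)⁻¹ := by
    calc (∑ k ∈ Finset.range N, ((nk k + 1).toNat : ℝ))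
        ≤ ∑ k ∈ Finset.range N, n / s k := Finset.sum_le_sum (fun k _ => hterm k)
      _ = (n * (1 + w) / (w * δ)) * ∑ k ∈ Finset.range N, (1 / b) ^ k := by
          rw [Finset.mul_sum]; exact Finset.sum_congr rfl (fun k _ => hgeo k)
      _ ≤ (n * (1 + w) / (w * δ)) * (1 - 1 / b)⁻¹ := by
          apply mul_le_mul_of_nonneg_left
          · exact geom_sum_le_inv_one_sub (by positivity)
              (by rw [div_lt_one hb0]; linarith) N
          · positivity
  have hfinal : (n * (1 + w) / (w * δ)) * (1 - 1 / b)⁻¹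
      = ((1 + w) * b) / (w * (b - 1)) * (n / δ) := by
    have hb1 : (0:ℝ) < b - 1 := by linarith
    field_simp
  calc (ℛ.ncard : ℝ) ≤ ((∑ k ∈ Finset.range N, (nk k + 1).toNat : ℕ) : ℝ) := by
        exact_mod_cast hcard.trans hDcard
    _ = ∑ k ∈ Finset.range N, ((nk k + 1).toNat : ℝ) := by push_cast; rfl
    _ ≤ (n * (1 + w) / (w * δ)) * (1 - 1 / b)⁻¹ := hsum
    _ = ((1 + w) * b) / (w * (b - 1)) * (n / δ) := hfinal
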